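/- Let d be a positive natural number, let T ∈ Matrix (Fin d) (Fin d) ℂ be a density matrix (positive semidefinite with trace 1), and let E ∈ Matrix (Fin d) (Fin d) ℂ be an effect (E and 1 − E positive semidefinite). Then trace(E^{1/2} T E^{1/2} · E) = trace(T · E²) ≥ (trace(T · E))². Consequently, for any ε ∈ [0,1), if trace(T · E) ≥ 1 − ε then trace(E^{1/2} T E^{1/2} · E) ≥ (1 − ε) · trace(T · E). -/

import Mathlib

open scoped ComplexOrder Matrix

namespace Matrix.PosSemidef
noncomputable def sqrt {n : Type*} [Fintype n] [DecidableEq n] {𝕜 : Type*} [RCLike 𝕜]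
    {A : Matrix n n 𝕜} (hA : A.PosSemidef) : Matrix n n 𝕜 :=
  hA.1.eigenvectorUnitary.1 * Matrix.diagonal ((↑) ∘ (√·) ∘ hA.1.eigenvalues) *
  (star hA.1.eigenvectorUnitary : Matrix n n 𝕜)

lemma sqrt_mul_self {n : Type*} [Fintype n] [DecidableEq n] {𝕜 : Type*} [RCLike 𝕜]
    {A : Matrix n n 𝕜} (hA : A.PosSemidef) : hA.sqrt * hA.sqrt = A := by
  have hU : (star hA.1.eigenvectorUnitary : Matrix n n 𝕜) * hA.1.eigenvectorUnitary.1 = 1 :=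
    Unitary.star_mul_self_of_mem hA.1.eigenvectorUnitary.2
  have hs := hA.1.spectral_theorem
  rw [Unitary.conjStarAlgAut_apply] at hs
  conv_rhs => rw [hs]
  unfold sqrt
  have : ∀ X Y : Matrix n n 𝕜, hA.1.eigenvectorUnitary.1 * X *
      (star hA.1.eigenvectorUnitary : Matrix n n 𝕜) * (hA.1.eigenvectorUnitary.1 * Y *
      (star hA.1.eigenvectorUnitary : Matrix n n 𝕜)) = hA.1.eigenvectorUnitary.1 * (X * Y) *
      (star hA.1.eigenvectorUnitary : Matrix n n 𝕜) := by
    intro X Y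
    simp only [mul_assoc]
    rw [← mul_assoc (star _ : Matrix n n 𝕜), hU, one_mul]
  rw [this, Matrix.diagonal_mul_diagonal]
  congr 3
  funext i
  simp only [Function.comp_apply]
  rw [← RCLike.ofReal_mul, Real.mul_self_sqrt (hA.eigenvalues_nonneg i)]

lemma posSemidef_sqrt {n : Type*} [Fintype n] [DecidableEq n] {𝕜 : Type*} [RCLike 𝕜]
    {A : Matrix n n 𝕜} (hA : A.PosSemidef) : hA.sqrt.PosSemidef := by
  unfold sqrt
  have := (Matrix.posSemidef_diagonal_iff (d := ((↑) ∘ (√·) ∘ hA.1.eigenvalues : n → 𝕜))).mpr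
    (fun i => RCLike.ofReal_nonneg.mpr (Real.sqrt_nonneg _))
  have h2 := this.mul_mul_conjTranspose_same hA.1.eigenvectorUnitary.1
  rwa [← Matrix.star_eq_conjTranspose, ← Unitary.coe_star] at h2
end Matrix.PosSemidef

lemma trace_conjTranspose_mul_self_nonneg {d : ℕ} (M : Matrix (Fin d) (Fin d) ℂ) :
    0 ≤ (Mᴴ * M).trace := by
  rw [Matrix.trace]
  refine Finset.sum_nonneg fun i _ => ?_
  simp only [Matrix.diag, Matrix.mul_apply, Matrix.conjTranspose_apply]
  exact Finset.sum_nonneg fun j _ => star_mul_self_nonneg _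

/-- Approximate ideality of generalized Lüders operations: the Lüders operation of
an effect `E` does not decrease an already-high outcome probability. -/
theorem lueders_approximate_ideality
    (d : ℕ) (hd : 0 < d) (T E : Matrix (Fin d) (Fin d) ℂ)
    (hT : T.PosSemidef) (hTtr : T.trace = 1)
    (hE : E.PosSemidef) (hE' : (1 - E).PosSemidef) :
    (hE.sqrt * T * hE.sqrt * E).trace = (T * (E * E)).trace ∧
    ((T * E).trace) ^ 2 ≤ (T * (E * E)).trace ∧
    ∀ ε : ℝ, 0 ≤ ε → ε < 1 → ((1 - ε : ℂ)) ≤ (T * E).trace →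
      ((1 - ε : ℂ)) * (T * E).trace ≤ (hE.sqrt * T * hE.sqrt * E).trace := by
  set sT := hT.sqrt with hsT
  set sE := hE.sqrt with hsE
  have hsTm : sT * sT = T := hT.sqrt_mul_self
  have hsEm : sE * sE = E := hE.sqrt_mul_self
  have hsTH : sTᴴ = sT := hT.posSemidef_sqrt.1
  have hsEH : sEᴴ = sE := hE.posSemidef_sqrt.1
  set c := (T * E).trace with hc
  -- part 1
  have h1 : (sE * T * sE * E).trace = (T * (E * E)).trace := by
    calc (sE * T * sE * E).trace = ((sE * T) * (sE * E)).trace := by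
          rw [mul_assoc, mul_assoc]
      _ = ((sE * E) * (sE * T)).trace := Matrix.trace_mul_comm _ _
      _ = ((E * E) * T).trace := by
          rw [← hsEm]
          simp only [← mul_assoc]
      _ = (T * (E * E)).trace := Matrix.trace_mul_comm _ _
  -- c is nonneg
  have hc0 : 0 ≤ c := by
    have h2 : ((sE * sT)ᴴ * (sE * sT)).trace = c := by
      rw [Matrix.conjTranspose_mul, hsTH, hsEH, hc]
      calc ((sT * sE) * (sE * sT)).trace
          = ((sT * E) * sT).trace := by rw [← hsEm]; simp only [← mul_assoc]
        _ = (sT * (sT * E)).trace := Matrix.trace_mul_comm _ _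
        _ = (T * E).trace := by rw [← mul_assoc, hsTm]
    exact h2 ▸ trace_conjTranspose_mul_self_nonneg _
  have hcstar : star c = c := by
    rw [Complex.star_def, Complex.conj_eq_iff_im]
    exact ((Complex.le_def.mp hc0).2).symm
  -- Cauchy-Schwarz
  have key : c ^ 2 ≤ (T * (E * E)).trace := by
    set M := sT * E - c • sT with hM
    have hEH : Eᴴ = E := hE.1
    have hMH : Mᴴ = E * sT - c • sT := by
      simp [hM, Matrix.conjTranspose_sub, Matrix.conjTranspose_mul,
        Matrix.conjTranspose_smul, hsTH, hEH, hcstar]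
    have t1 : (E * sT * (sT * E)).trace = (T * (E * E)).trace := by
      calc (E * sT * (sT * E)).trace = ((E * T) * E).trace := by
            rw [← hsTm]; simp only [← mul_assoc]
        _ = (E * (E * T)).trace := Matrix.trace_mul_comm _ _
        _ = (T * (E * E)).trace := by
            rw [← mul_assoc]; exact Matrix.trace_mul_comm _ _
    have t2 : (E * sT * sT).trace = c := by
      rw [mul_assoc, hsTm, hc]; exact Matrix.trace_mul_comm _ _
    have t3 : (sT * (sT * E)).trace = c := by rw [← mul_assoc, hsTm, hc]
    have h3 : (Mᴴ * M).trace = (T * (E * E)).trace - c ^ 2 := by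
      rw [hMH, hM]
      simp only [Matrix.sub_mul, Matrix.mul_sub, smul_mul_assoc,
        mul_smul_comm, smul_smul, Matrix.trace_sub, Matrix.trace_smul,
        smul_eq_mul]
      rw [t1, t2, t3]
      have t4 : (sT * sT).trace = 1 := by rw [hsTm, hTtr]
      rw [t4]
      ring
    have := trace_conjTranspose_mul_self_nonneg M
    rw [h3] at this
    exact sub_nonneg.mp this
  refine ⟨h1, key, ?_⟩
  intro ε hε hε1 hεc
  have h4 : (0:ℂ) ≤ (1 - ε : ℂ) := by
    have : (0:ℝ) ≤ 1 - ε := by linarith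
    simpa using Complex.zero_le_real.mpr this
  calc (1 - ε : ℂ) * c ≤ c * c := mul_le_mul_of_nonneg_right hεc hc0
    _ = c ^ 2 := (sq c).symm
    _ ≤ (T * (E * E)).trace := key
    _ = (sE * T * sE * E).trace := h1.symm
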